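/- Every analytic set of real numbers (the continuous image of a Borel subset of a Polish space) is Lebesgue measurable. -/

import Mathlib

open MeasureTheory Set Function Metric Filter Topology ENNReal

-- Step choice lemma: we can extend the constraint by one coordinate losing little measure.
private lemma capa_step (μ : Measure ℝ) [IsFiniteMeasure μ] (f : (ℕ → ℕ) → ℝ)
    {ε : ℝ≥0∞} (hε : ε ≠ 0) (z : ℕ → ℕ) (k : ℕ) :
    ∃ n : ℕ, μ (f '' {y | ∀ i < k + 1, y i ≤ Function.update z k n i}) + ε * 2⁻¹ ^ (k + 1) ≥
      μ (f '' {y | ∀ i < k, y i ≤ z i}) := by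
  set C : ℕ → Set (ℕ → ℕ) := fun n => {y | ∀ i < k + 1, y i ≤ Function.update z k n i} with hC
  have hmono : Monotone (fun n => f '' C n) := by
    intro a b hab
    apply image_mono
    intro y hy i hi
    have h1 := hy i hi
    rcases Nat.lt_succ_iff_lt_or_eq.1 hi with h | h
    · rw [Function.update_of_ne h.ne] at h1 ⊢
      exact h1
    · rw [h, Function.update_self] at h1 ⊢
      exact h1.trans hab
  have hU' : (⋃ n, C n) = {y | ∀ i < k, y i ≤ z i} := by
    apply Subset.antisymm
    · intro y hy
      obtain ⟨n, hn⟩ := mem_iUnion.1 hy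
      intro i hi
      have := hn i (hi.trans (Nat.lt_succ_self k))
      rwa [Function.update_of_ne hi.ne] at this
    · intro y hy
      refine mem_iUnion.2 ⟨y k, fun i hi => ?_⟩
      rcases Nat.lt_succ_iff_lt_or_eq.1 hi with h | h
      · rw [Function.update_of_ne h.ne]; exact hy i h
      · subst h; simp
  have hU : ⋃ n, f '' C n = f '' {y | ∀ i < k, y i ≤ z i} := by
    rw [← image_iUnion, hU']
  have hsup : (⨆ n, μ (f '' C n)) = μ (f '' {y | ∀ i < k, y i ≤ z i}) := by
    rw [← hmono.measure_iUnion, hU]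
  by_contra hcon
  push_neg at hcon
  have hεk : (ε * 2⁻¹ ^ (k + 1) : ℝ≥0∞) ≠ 0 :=
    mul_ne_zero hε (pow_ne_zero _ (ENNReal.inv_ne_zero.2 ENNReal.ofNat_ne_top))
  have hεtop : (ε * 2⁻¹ ^ (k + 1) : ℝ≥0∞) ≠ ⊤ :=
    (lt_of_le_of_lt le_add_self ((hcon 0).trans (measure_lt_top μ _))).ne
  have hlt : ∀ n, μ (f '' C n) ≤ μ (f '' {y | ∀ i < k, y i ≤ z i}) - ε * 2⁻¹ ^ (k + 1) := by
    intro n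
    exact ENNReal.le_sub_of_add_le_right hεtop (hcon n).le
  have h1 : μ (f '' {y | ∀ i < k, y i ≤ z i}) ≤
      μ (f '' {y | ∀ i < k, y i ≤ z i}) - ε * 2⁻¹ ^ (k + 1) := by
    conv_lhs => rw [← hsup]
    exact iSup_le hlt
  have h0 : μ (f '' {y | ∀ i < k, y i ≤ z i}) ≠ 0 := by
    intro h
    have := (hcon 0)
    rw [h] at this
    exact absurd this.le (by simp [hεk, pos_iff_ne_zero])
  have := ENNReal.sub_lt_self (measure_ne_top μ _) h0 hεk
  exact absurd h1 (not_le.2 this)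

/-- Capacitability: for a finite measure, the analytic set `range f` admits compact subsets
of almost full outer measure. -/
private lemma capa (μ : Measure ℝ) [IsFiniteMeasure μ] {f : (ℕ → ℕ) → ℝ}
    (hf : Continuous f) {ε : ℝ≥0∞} (hε : ε ≠ 0) :
    ∃ K : Set ℝ, IsCompact K ∧ K ⊆ Set.range f ∧ μ (Set.range f) ≤ μ K + ε := by
  classical
  -- construct the sequence by recursion with choice
  let z : ℕ → (ℕ → ℕ) := fun k =>
    Nat.rec (fun _ => 0)
      (fun k zk => Function.update zk k (Classical.choose (capa_step μ f hε zk k))) k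
  let x : ℕ → ℕ := fun i => z (i + 1) i
  have hz : ∀ k, z (k + 1) =
      Function.update (z k) k (Classical.choose (capa_step μ f hε (z k) k)) := fun k => rfl
  have hpre : ∀ k i, i < k → z k i = x i := by
    intro k
    induction k with
    | zero => intro i hi; exact absurd hi (Nat.not_lt_zero i)
    | succ k ih =>
      intro i hi
      rcases Nat.lt_succ_iff_lt_or_eq.1 hi with h | h
      · rw [hz k, Function.update_of_ne h.ne]
        exact ih i h
      · subst h; rfl
  have hCk : ∀ k, {y : ℕ → ℕ | ∀ i < k, y i ≤ z k i} = {y | ∀ i < k, y i ≤ x i} := by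
    intro k
    ext y
    exact forall₂_congr fun i hi => by rw [hpre k i hi]
  have hchain : ∀ k, μ (f '' {y | ∀ i < k, y i ≤ x i}) ≤
      μ (f '' {y | ∀ i < k + 1, y i ≤ x i}) + ε * 2⁻¹ ^ (k + 1) := by
    intro k
    have h' : μ (f '' {y | ∀ i < k, y i ≤ z k i}) ≤
        μ (f '' {y | ∀ i < k + 1, y i ≤ z (k + 1) i}) + ε * 2⁻¹ ^ (k + 1) := by
      rw [hz k]
      exact Classical.choose_spec (capa_step μ f hε (z k) k)
    rw [hCk k, hCk (k + 1)] at h'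
    exact h'
  -- telescoping
  have htel : ∀ k, μ (Set.range f) ≤ μ (f '' {y | ∀ i < k, y i ≤ x i}) + ε := by
    have hsum : ∀ k, (∑ i ∈ Finset.range k, ε * 2⁻¹ ^ (i + 1)) ≤ ε := by
      intro k
      rw [← Finset.mul_sum]
      calc ε * ∑ i ∈ Finset.range k, (2⁻¹ : ℝ≥0∞) ^ (i + 1)
          ≤ ε * ∑' i : ℕ, (2⁻¹ : ℝ≥0∞) ^ (i + 1) := by
            gcongr
            exact ENNReal.sum_le_tsum _
        _ = ε * 1 := by
            congr 1
            have h1 : ∑' i : ℕ, (2⁻¹ : ℝ≥0∞) ^ (i + 1) = 2⁻¹ * ∑' i : ℕ, (2⁻¹ : ℝ≥0∞) ^ i := by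
              rw [← ENNReal.tsum_mul_left]
              congr 1; ext i; ring
            have h12 : (1 : ℝ≥0∞) - 2⁻¹ = 2⁻¹ := by
              apply ENNReal.sub_eq_of_eq_add (ENNReal.inv_ne_top.2 two_ne_zero)
              rw [← two_mul, ENNReal.mul_inv_cancel two_ne_zero ENNReal.ofNat_ne_top]
            rw [h1, ENNReal.tsum_geometric, h12, inv_inv]
            exact ENNReal.inv_mul_cancel two_ne_zero ENNReal.ofNat_ne_top
        _ = ε := mul_one ε
    have haux : ∀ k, μ (Set.range f) ≤
        μ (f '' {y | ∀ i < k, y i ≤ x i}) + ∑ i ∈ Finset.range k, ε * 2⁻¹ ^ (i + 1) := by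
      intro k
      induction k with
      | zero =>
        simp only [Finset.range_zero, Finset.sum_empty, add_zero]
        have : {y : ℕ → ℕ | ∀ i < 0, y i ≤ x i} = Set.univ := by
          ext y; simp
        rw [this, image_univ]
      | succ k ih =>
        calc μ (Set.range f)
            ≤ μ (f '' {y | ∀ i < k, y i ≤ x i}) + ∑ i ∈ Finset.range k, ε * 2⁻¹ ^ (i + 1) := ih
          _ ≤ (μ (f '' {y | ∀ i < k + 1, y i ≤ x i}) + ε * 2⁻¹ ^ (k + 1)) +
              ∑ i ∈ Finset.range k, ε * 2⁻¹ ^ (i + 1) := by gcongr; exact hchain k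
          _ = μ (f '' {y | ∀ i < k + 1, y i ≤ x i}) +
              ∑ i ∈ Finset.range (k + 1), ε * 2⁻¹ ^ (i + 1) := by
              rw [Finset.sum_range_succ]; ring
    intro k
    exact (haux k).trans (by gcongr; exact hsum k)
  -- the compact set
  set T : Set (ℕ → ℕ) := Set.pi Set.univ fun i => Set.Iic (x i) with hT
  have hTcomp : IsCompact T :=
    isCompact_univ_pi fun i => (Set.finite_Iic (x i)).isCompact
  set K : Set ℝ := f '' T with hK
  have hKcomp : IsCompact K := hTcomp.image hf
  have hKsub : K ⊆ Set.range f := image_subset_range f T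
  refine ⟨K, hKcomp, hKsub, ?_⟩
  -- covering claim
  have hcover : ∀ δ : ℝ, 0 < δ → ∃ k, f '' {y | ∀ i < k, y i ≤ x i} ⊆ thickening δ K := by
    intro δ hδ
    by_contra hcon
    push_neg at hcon
    have : ∀ k, ∃ y : ℕ → ℕ, (∀ i < k, y i ≤ x i) ∧ f y ∉ thickening δ K := by
      intro k
      obtain ⟨w, hw, hw2⟩ := not_subset.1 (hcon k)
      obtain ⟨y, hy, rfl⟩ := hw
      exact ⟨y, hy, hw2⟩
    choose y hy1 hy2 using this
    set M : ℕ → ℕ := fun i => max (x i) ((Finset.range (i + 1)).sup fun k => y k i) with hM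
    have hyT : ∀ k, y k ∈ Set.pi Set.univ fun i => Set.Iic (M i) := by
      intro k i _
      simp only [Set.mem_Iic]
      rcases lt_or_ge i k with h | h
      · exact le_max_of_le_left (hy1 k i h)
      · exact le_max_of_le_right (Finset.le_sup (f := fun k => y k i) (Finset.mem_range.2 (Nat.lt_succ_of_le h)))
    have hMcomp : IsCompact (Set.pi Set.univ fun i => Set.Iic (M i)) :=
      isCompact_univ_pi fun i => (Set.finite_Iic (M i)).isCompact
    obtain ⟨p, _, φ, hφ, hconv⟩ := hMcomp.tendsto_subseq hyT
    have hpT : p ∈ T := by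
      intro i _
      simp only [Set.mem_Iic]
      have h1 : Tendsto (fun j => y (φ j) i) atTop (𝓝 (p i)) :=
        ((continuous_apply i).continuousAt).tendsto.comp hconv
      have h2 : ∀ᶠ j in atTop, y (φ j) i = p i :=
        h1 (IsOpen.mem_nhds (isOpen_discrete {p i}) rfl)
      have h3 : ∀ᶠ j in atTop, i < φ j := by
        filter_upwards [eventually_gt_atTop i] with j hj
        exact lt_of_lt_of_le hj hφ.le_apply
      obtain ⟨j, hj2, hj3⟩ := (h2.and h3).exists
      rw [← hj2]
      exact hy1 (φ j) i hj3
    have hfp : f p ∈ thickening δ K :=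
      self_subset_thickening hδ K ⟨p, hpT, rfl⟩
    have h4 : Tendsto (fun j => f (y (φ j))) atTop (𝓝 (f p)) :=
      (hf.continuousAt.tendsto).comp hconv
    have h5 : ∀ᶠ j in atTop, f (y (φ j)) ∈ thickening δ K :=
      h4 (isOpen_thickening.mem_nhds hfp)
    obtain ⟨j, hj⟩ := h5.exists
    exact hy2 (φ j) hj
  -- K equals the intersection of its closed thickenings
  have hKi : (⋂ m : ℕ, cthickening ((m + 1 : ℝ)⁻¹) K) = K := by
    have h1 : closure K = ⋂ δ ∈ Set.range (fun m : ℕ => ((m + 1 : ℝ)⁻¹)), cthickening δ K := by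
      apply closure_eq_iInter_cthickening'
      intro η hη
      obtain ⟨m, hm⟩ := exists_nat_one_div_lt hη
      refine ⟨(m + 1 : ℝ)⁻¹, ⟨m, by push_cast; ring⟩, ?_, ?_⟩
      · positivity
      · rw [one_div] at hm; exact_mod_cast hm.le
    rw [biInter_range] at h1
    rw [← h1, hKcomp.isClosed.closure_eq]
  have hKm : μ K = ⨅ m : ℕ, μ (cthickening ((m + 1 : ℝ)⁻¹) K) := by
    have hanti : Antitone (fun m : ℕ => cthickening ((m + 1 : ℝ)⁻¹) K) := by
      intro a b hab
      apply cthickening_mono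
      gcongr
    have h := hanti.measure_iInter
      (fun m => (isClosed_cthickening.measurableSet).nullMeasurableSet (μ := μ))
      ⟨0, measure_ne_top μ _⟩
    rwa [hKi] at h
  rw [hKm]
  rw [ENNReal.iInf_add]
  apply le_iInf
  intro m
  obtain ⟨k, hk⟩ := hcover ((m + 1 : ℝ)⁻¹) (by positivity)
  calc μ (Set.range f) ≤ μ (f '' {y | ∀ i < k, y i ≤ x i}) + ε := htel k
    _ ≤ μ (cthickening ((m + 1 : ℝ)⁻¹) K) + ε := by
        gcongr
        exact (hk.trans (thickening_subset_cthickening _ _))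

/-- Analytic sets are null measurable for any finite measure on ℝ. -/
private lemma analytic_nullMeasurable_finite (μ : Measure ℝ) [IsFiniteMeasure μ]
    {s : Set ℝ} (hs : AnalyticSet s) : NullMeasurableSet s μ := by
  rw [AnalyticSet] at hs
  rcases hs with rfl | ⟨f, hfc, rfl⟩
  · exact (MeasurableSet.empty).nullMeasurableSet
  · have h : ∀ m : ℕ, ∃ K : Set ℝ, IsCompact K ∧ K ⊆ Set.range f ∧
        μ (Set.range f) ≤ μ K + (m + 1 : ℝ≥0∞)⁻¹ := by
      intro m
      exact capa μ hfc (by simp)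
    choose K hKc hKs hKm using h
    set t : Set ℝ := ⋃ m, K m with ht
    have htm : MeasurableSet t := MeasurableSet.iUnion fun m => (hKc m).isClosed.measurableSet
    have hts : t ⊆ Set.range f := iUnion_subset hKs
    have h1 : μ (Set.range f) ≤ μ t := by
      have : ∀ m : ℕ, μ (Set.range f) ≤ μ t + (m + 1 : ℝ≥0∞)⁻¹ := fun m =>
        (hKm m).trans (by gcongr; exact subset_iUnion K m)
      refine ENNReal.le_of_forall_pos_le_add fun δ hδ _ => ?_
      obtain ⟨m, hm⟩ := ENNReal.exists_inv_nat_lt (by exact_mod_cast hδ.ne' : (δ : ℝ≥0∞) ≠ 0)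
      refine (this m).trans ?_
      gcongr
      refine le_trans ?_ hm.le
      rw [ENNReal.inv_le_inv]
      exact_mod_cast Nat.le_succ m
    have h2 : μ t = μ (Set.range f) := le_antisymm (measure_mono hts) h1
    have h3 : μ (Set.range f \ t) = 0 := by
      have hsub : Set.range f \ t ⊆ toMeasurable μ (Set.range f) \ t :=
        diff_subset_diff_left (subset_toMeasurable μ _)
      refine measure_mono_null hsub ?_
      rw [measure_diff (hts.trans (subset_toMeasurable μ _)) htm.nullMeasurableSet
        (measure_ne_top μ t), measure_toMeasurable, ← h2, tsub_self]
    have h4 : Set.range f = t ∪ (Set.range f \ t) := (union_diff_cancel hts).symm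
    rw [h4]
    exact (htm.nullMeasurableSet).union (NullMeasurableSet.of_null h3)

/-- Transfer null measurability from a restricted measure. -/
private lemma nullMeasurable_of_restrict {A T : Set ℝ} (hT : MeasurableSet T) (hAT : A ⊆ T)
    (hA : NullMeasurableSet A (volume.restrict T)) : NullMeasurableSet A (volume : Measure ℝ) := by
  obtain ⟨t, htA, htm, heq⟩ := hA.exists_measurable_subset_ae_eq
  have h1 : volume.restrict T (A \ t) = 0 := (ae_eq_set.1 heq).2
  rw [Measure.restrict_apply' hT] at h1
  have h2 : volume (A \ t) = 0 := by
    rwa [inter_eq_self_of_subset_left (diff_subset.trans hAT)] at h1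
  have h3 : A = t ∪ (A \ t) := (union_diff_cancel htA).symm
  rw [h3]
  exact htm.nullMeasurableSet.union (NullMeasurableSet.of_null h2)

theorem stmt_14 (s : Set ℝ) (hs : AnalyticSet s) :
    NullMeasurableSet s (volume : Measure ℝ) := by
  have hcover : s = ⋃ n : ℕ, s ∩ Ioo (-(n + 1 : ℝ)) (n + 1) := by
    apply Subset.antisymm
    · intro r hr
      obtain ⟨n, hn⟩ := exists_nat_gt |r|
      refine mem_iUnion.2 ⟨n, hr, ?_⟩
      have h1 : |r| < (n : ℝ) + 1 := hn.trans (by linarith)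
      rw [abs_lt] at h1
      exact ⟨by linarith [h1.1], h1.2⟩
    · exact iUnion_subset fun n => inter_subset_left
  rw [hcover]
  refine NullMeasurableSet.iUnion fun n => ?_
  set T : Set ℝ := Ioo (-(n + 1 : ℝ)) (n + 1) with hT
  have hTm : MeasurableSet T := measurableSet_Ioo
  have hanalytic : AnalyticSet (s ∩ T) := by
    have : s ∩ T = ⋂ b : Bool, (if b then s else T) := by
      ext r
      simp [Bool.forall_bool, and_comm]
    rw [this]
    refine AnalyticSet.iInter fun b => ?_
    cases b
    · simpa using hTm.analyticSet
    · simpa using hs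
  have : IsFiniteMeasure (volume.restrict T) := by
    constructor
    rw [Measure.restrict_apply_univ, hT, Real.volume_Ioo]
    exact ENNReal.ofReal_lt_top
  exact nullMeasurable_of_restrict hTm inter_subset_right
    (analytic_nullMeasurable_finite (volume.restrict T) hanalytic)
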